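/- Let a₁ < a₂ < ⋯ < a_k be positive integers with gcd 1, and for a nonnegative integer p let m_j^{(p)} (0 ≤ j ≤ a₁−1) be the least nonnegative integer congruent to j modulo a₁ that has at least p+1 representations as a nonnegative integer combination of a₁,…,a_k. Then the number of nonnegative integers with at most p representations equals (1/a₁)·Σ_{j=0}^{a₁−1} m_j^{(p)} − (a₁−1)/2. -/

import Mathlib

/-- Lemma 2 (Apéry-set formula for the `p`-Sylvester number):
`n_p = (1/a₁) Σ_j m_j^{(p)} - (a₁-1)/2`. -/
theorem p_sylvester_via_apery (k : ℕ) (hk : 1 ≤ k) (a : Fin k → ℕ)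
    (hmono : StrictMono a) (hpos : 0 < a ⟨0, hk⟩)
    (hgcd : Finset.univ.gcd a = 1) (p : ℕ) (m : ℕ → ℕ)
    (hm : ∀ j < a ⟨0, hk⟩,
      IsLeast {N : ℕ | N % a ⟨0, hk⟩ = j ∧
        p + 1 ≤ Nat.card {x : Fin k → ℕ // ∑ i, x i * a i = N}} (m j)) :
    (Nat.card {N : ℕ |
        Nat.card {x : Fin k → ℕ // ∑ i, x i * a i = N} ≤ p} : ℚ)
      = (∑ j ∈ Finset.range (a ⟨0, hk⟩), (m j : ℚ)) / (a ⟨0, hk⟩ : ℚ)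
        - ((a ⟨0, hk⟩ : ℚ) - 1) / 2 := by
  set i0 : Fin k := ⟨0, hk⟩ with hi0
  set a1 := a i0 with ha1
  set r : ℕ → ℕ := fun N => Nat.card {x : Fin k → ℕ // ∑ i, x i * a i = N} with hr
  have hapos : ∀ i, 0 < a i := by
    intro i
    exact lt_of_lt_of_le hpos (hmono.monotone (show i0 ≤ i by simp [hi0, Fin.le_def]))
  -- finiteness of representation sets
  have hfin : ∀ N, Finite {x : Fin k → ℕ // ∑ i, x i * a i = N} := by
    intro N
    have hb : ∀ (x : {x : Fin k → ℕ // ∑ i, x i * a i = N}) (i : Fin k), x.1 i < N + 1 := by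
      intro x i
      have h1 : x.1 i * a i ≤ N := by
        have h0 : x.1 i * a i ≤ ∑ i, x.1 i * a i :=
          Finset.single_le_sum (f := fun i => x.1 i * a i)
            (fun _ _ => Nat.zero_le _) (Finset.mem_univ i)
        rw [x.2] at h0
        exact h0
      have h2 : x.1 i ≤ x.1 i * a i := Nat.le_mul_of_pos_right _ (hapos i)
      omega
    exact Finite.of_injective (fun x => (fun i => (⟨x.1 i, hb x i⟩ : Fin (N + 1))))
      (by
        intro x y hxy
        apply Subtype.ext; funext i
        have := congrFun hxy i
        simpa using this)
  -- monotonicity along +a1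
  have hmonor : ∀ N, r N ≤ r (N + a1) := by
    intro N
    haveI := hfin N; haveI := hfin (N + a1)
    have key : ∀ (x : Fin k → ℕ) (v : ℕ),
        ∑ i, Function.update x i0 v i * a i
          = v * a i0 + ∑ i ∈ Finset.univ.erase i0, x i * a i := by
      intro x v
      rw [← Finset.add_sum_erase _ _ (Finset.mem_univ i0), Function.update_self]
      congr 1
      exact Finset.sum_congr rfl fun i hi => by
        rw [Function.update_of_ne (Finset.ne_of_mem_erase hi)]
    have key0 : ∀ (x : Fin k → ℕ),
        ∑ i, x i * a i = x i0 * a i0 + ∑ i ∈ Finset.univ.erase i0, x i * a i := by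
      intro x
      rw [← Finset.add_sum_erase _ _ (Finset.mem_univ i0)]
    apply Nat.card_le_card_of_injective
      (f := fun x => ⟨Function.update x.1 i0 (x.1 i0 + 1), by
        rw [key x.1 (x.1 i0 + 1), add_mul, one_mul, ha1]
        have hx2 := x.2
        rw [key0 x.1] at hx2
        omega⟩)
    intro x y hxy
    have h : Function.update x.1 i0 (x.1 i0 + 1) = Function.update y.1 i0 (y.1 i0 + 1) :=
      congrArg Subtype.val hxy
    apply Subtype.ext; funext i
    by_cases hii : i = i0
    · have h0 := congrFun h i0
      simp only [Function.update_self] at h0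
      subst hii
      omega
    · have h0 := congrFun h i
      rwa [Function.update_of_ne hii, Function.update_of_ne hii] at h0
  -- everything ≥ m j in class j has ≥ p+1 reps
  have hC' : ∀ j < a1, ∀ t, p + 1 ≤ r (m j + a1 * t) := by
    intro j hj t
    induction t with
    | zero => simpa using (hm j hj).1.2
    | succ t ih =>
        have h1 := hmonor (m j + a1 * t)
        have : m j + a1 * (t + 1) = m j + a1 * t + a1 := by ring
        rw [this]
        omega
  have hC : ∀ N, p + 1 ≤ r N ↔ m (N % a1) ≤ N := by
    intro N
    constructor
    · intro h
      exact (hm (N % a1) (Nat.mod_lt _ hpos)).2 ⟨rfl, h⟩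
    · intro hle
      have hmod : m (N % a1) % a1 = N % a1 := (hm (N % a1) (Nat.mod_lt _ hpos)).1.1
      have hdvd : a1 ∣ N - m (N % a1) := by
        have : Nat.ModEq a1 (m (N % a1)) N := by
          unfold Nat.ModEq
          rw [hmod]
        exact (Nat.modEq_iff_dvd' hle).mp this
      obtain ⟨t, ht⟩ := hdvd
      have hN : N = m (N % a1) + a1 * t := by omega
      rw [hN]
      exact hC' (N % a1) (Nat.mod_lt _ hpos) t
  -- the counting finset
  set q : ℕ → ℕ := fun j => m j / a1 with hq
  have hmjq : ∀ j < a1, m j = a1 * q j + j := by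
    intro j hj
    have hmod : m j % a1 = j := (hm j hj).1.1
    have hdm := Nat.div_add_mod (m j) a1
    simp only [hq]
    omega
  set s : Finset ℕ := (Finset.range a1).biUnion
    (fun j => (Finset.range (q j)).image (fun t => j + a1 * t)) with hs
  have hset : {N : ℕ | r N ≤ p} = ↑s := by
    ext N
    simp only [Set.mem_setOf_eq, Finset.coe_biUnion, Finset.mem_coe, Finset.mem_range,
      Set.mem_iUnion, Finset.mem_image, hs, Finset.mem_biUnion]
    constructor
    · intro h
      have hlt : N < m (N % a1) := by
        by_contra hge
        have := (hC N).mpr (by omega)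
        omega
      refine ⟨N % a1, Nat.mod_lt _ hpos, N / a1, ?_, ?_⟩
      · have := hmjq (N % a1) (Nat.mod_lt _ hpos)
        have hdm := Nat.div_add_mod N a1
        have : a1 * (N / a1) < a1 * q (N % a1) := by omega
        exact Nat.lt_of_mul_lt_mul_left this
      · have := Nat.mod_add_div N a1
        omega
    · rintro ⟨j, hj, t, ht, rfl⟩
      have hmodN : (j + a1 * t) % a1 = j := by
        rw [Nat.add_mul_mod_self_left, Nat.mod_eq_of_lt hj]
      have hlt : j + a1 * t < m j := by
        have := hmjq j hj
        have h2 : a1 * t < a1 * q j := (Nat.mul_lt_mul_left hpos).mpr ht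
        omega
      by_contra h
      have := (hC (j + a1 * t)).mp (by omega)
      rw [hmodN] at this
      omega
  have hcard : Nat.card {N : ℕ | r N ≤ p} = ∑ j ∈ Finset.range a1, q j := by
    rw [hset, Nat.card_coe_set_eq, Set.ncard_coe_finset, hs]
    rw [Finset.card_biUnion]
    · refine Finset.sum_congr rfl fun j hj => ?_
      rw [Finset.card_image_of_injective _ (fun t1 t2 h => by
        have : a1 * t1 = a1 * t2 := by omega
        exact Nat.eq_of_mul_eq_mul_left hpos this)]
      simp
    · intro j1 h1 j2 h2 hne
      simp only [Finset.mem_coe, Finset.mem_range] at h1 h2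
      rw [Function.onFun, Finset.disjoint_left]
      rintro N hN1 hN2
      simp only [Finset.mem_image, Finset.mem_range] at hN1 hN2
      obtain ⟨t1, _, rfl⟩ := hN1
      obtain ⟨t2, _, he⟩ := hN2
      apply hne
      have e1 : (j1 + a1 * t1) % a1 = j1 := by
        rw [Nat.add_mul_mod_self_left, Nat.mod_eq_of_lt h1]
      have e2 : (j2 + a1 * t2) % a1 = j2 := by
        rw [Nat.add_mul_mod_self_left, Nat.mod_eq_of_lt h2]
      rw [← he] at e1
      omega
  -- final arithmetic
  have hsum : (∑ j ∈ Finset.range a1, (m j : ℚ))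
      = (a1 : ℚ) * (∑ j ∈ Finset.range a1, (q j : ℚ)) + ∑ j ∈ Finset.range a1, (j : ℚ) := by
    rw [Finset.mul_sum, ← Finset.sum_add_distrib]
    refine Finset.sum_congr rfl fun j hj => ?_
    rw [Finset.mem_range] at hj
    have := hmjq j hj
    push_cast [this]
    ring
  have hgauss : (∑ j ∈ Finset.range a1, (j : ℚ)) * 2 = a1 * (a1 - 1) := by
    have h := Finset.sum_range_id_mul_two a1
    have hc : ((∑ j ∈ Finset.range a1, j : ℕ) : ℚ) * 2 = ((a1 * (a1 - 1) : ℕ) : ℚ) := by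
      exact_mod_cast congrArg (Nat.cast : ℕ → ℚ) h
    push_cast [Nat.cast_sub hpos] at hc
    convert hc using 2
  have hcardQ : (Nat.card {N : ℕ | r N ≤ p} : ℚ) = ∑ j ∈ Finset.range a1, (q j : ℚ) := by
    rw [hcard]; push_cast; ring
  have ha1ne : (a1 : ℚ) ≠ 0 := Nat.cast_ne_zero.mpr hpos.ne'
  calc (Nat.card {N : ℕ | r N ≤ p} : ℚ)
      = ∑ j ∈ Finset.range a1, (q j : ℚ) := hcardQ
    _ = (∑ j ∈ Finset.range a1, (m j : ℚ)) / (a1 : ℚ) - ((a1 : ℚ) - 1) / 2 := by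
        rw [hsum]
        field_simp
        linarith [hgauss]
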